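/- Let B₃ be the braid group on three strands, i.e. the group presented by generators σ₁, σ₂ and the single relation σ₁σ₂σ₁ = σ₂σ₁σ₂ (for instance, the presented group with relator σ₁σ₂σ₁σ₂⁻¹σ₁⁻¹σ₂⁻¹), and let d be the word metric on B₃ with respect to the symmetric generating set S = {σ₁, σ₁⁻¹, σ₂, σ₂⁻¹}. Then there exists a weakly-geodesic ray γ : T → B₃ such that for every geodesic ray γ' : T' → B₃ there exist y, z ∈ B₃ with lim_{t→∞, t∈T} (d(γ(t),y) − d(γ(t),z)) ≠ lim_{t→∞, t∈T'} (d(γ'(t),y) − d(γ'(t),z)); that is, the metric boundary of this Cayley graph of B₃ contains a point which is not a Busemann point. -/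

import Mathlib

open Filter Topology

/-- `T` is a valid domain for a ray: an unbounded subset of `[0,∞)` containing `0`. -/
def IsRayDomain (T : Set ℝ) : Prop :=
  T ⊆ Set.Ici (0 : ℝ) ∧ 0 ∈ T ∧ ∀ M : ℝ, ∃ t ∈ T, M < t

/-- A weakly-geodesic ray for the distance function `d`. -/
def WeaklyGeodesicRay {X : Type*} (d : X → X → ℝ) (T : Set ℝ) (γ : ℝ → X) : Prop :=
  ∀ y : X, ∀ ε : ℝ, 0 < ε → ∃ N : ℝ, ∀ s ∈ T, ∀ t ∈ T, N ≤ s → N ≤ t →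
    |d (γ t) (γ 0) - t| < ε ∧ |d (γ t) y - d (γ s) y - (t - s)| < ε

/-- An almost-geodesic ray for the distance function `d`. -/
def AlmostGeodesicRay {X : Type*} (d : X → X → ℝ) (T : Set ℝ) (γ : ℝ → X) : Prop :=
  ∀ ε : ℝ, 0 < ε → ∃ N : ℝ, ∀ s ∈ T, ∀ t ∈ T, N ≤ s → s ≤ t →
    |d (γ t) (γ s) + d (γ s) (γ 0) - t| < ε

/-- A geodesic ray for the distance function `d`. -/
def GeodesicRay {X : Type*} (d : X → X → ℝ) (T : Set ℝ) (γ : ℝ → X) : Prop :=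
  ∀ s ∈ T, ∀ t ∈ T, d (γ s) (γ t) = |s - t|

/-- `L` is the limit of `d(γ(t),y) - d(γ(t),z)` as `t → ∞` along `T`. -/
def RayLimit {X : Type*} (d : X → X → ℝ) (T : Set ℝ) (γ : ℝ → X) (y z : X) (L : ℝ) : Prop :=
  Tendsto (fun t => d (γ t) y - d (γ t) z) (atTop ⊓ 𝓟 T) (𝓝 L)

/-- The word metric on a group `G` with respect to a generating set `S`:
`wordDist S g h` is the least `n` such that `g⁻¹ * h` is a product of `n` elements of `S`. -/
noncomputable def wordDist {G : Type*} [Group G] (S : Set G) (g h : G) : ℕ :=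
  sInf {n | ∃ l : List G, l.length = n ∧ (∀ x ∈ l, x ∈ S) ∧ l.prod = g⁻¹ * h}

/-- The braid relator `σ₁σ₂σ₁σ₂⁻¹σ₁⁻¹σ₂⁻¹` in the free group on two generators. -/
def braidRel : Set (FreeGroup (Fin 2)) :=
  {FreeGroup.of 0 * FreeGroup.of 1 * FreeGroup.of 0 *
    (FreeGroup.of 1)⁻¹ * (FreeGroup.of 0)⁻¹ * (FreeGroup.of 1)⁻¹}

/-- The braid group `B₃` on three strands, presented by generators `σ₁, σ₂` and the
single relation `σ₁σ₂σ₁ = σ₂σ₁σ₂`. -/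
abbrev B3 := PresentedGroup braidRel

/-- The generators `σ₁, σ₂` of `B₃`. -/
def σ (i : Fin 2) : B3 := PresentedGroup.of i

namespace B3X

inductive Letter : Type
  | S : Letter
  | R1 : Letter
  | R2 : Letter
deriving DecidableEq

open Letter

def Letter.isR : Letter → Bool
  | S => false
  | R1 => true
  | R2 => true

def Ok (x y : Letter) : Prop := x.isR ≠ y.isR

abbrev Valid (l : List Letter) : Prop := l.Chain' Ok

def W : Type := {l : List Letter // Valid l}

def sL : List Letter → List Letter
  | [] => [S]
  | S :: t => t
  | R1 :: t => S :: R1 :: t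
  | R2 :: t => S :: R2 :: t

def rL : List Letter → List Letter
  | [] => [R1]
  | S :: t => R1 :: S :: t
  | R1 :: t => R2 :: t
  | R2 :: t => t

def r2L : List Letter → List Letter
  | [] => [R2]
  | S :: t => R2 :: S :: t
  | R1 :: t => t
  | R2 :: t => R1 :: t

lemma valid_sL {l : List Letter} (h : Valid l) : Valid (sL l) := by
  match l with
  | [] => simp [sL, Valid, List.Chain']
  | S :: t => exact h.tail
  | R1 :: t => exact List.isChain_cons_cons.mpr ⟨by simp [Ok, Letter.isR], h⟩
  | R2 :: t => exact List.isChain_cons_cons.mpr ⟨by simp [Ok, Letter.isR], h⟩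

lemma valid_cons_r {c : Letter} {t : List Letter} (hc : c.isR = true) (h : Valid t)
    (ht : ∀ d ∈ t.head?, d = S) : Valid (c :: t) := by
  match t with
  | [] => simp [Valid, List.Chain']
  | d :: t' =>
    have hd : d = S := ht d rfl
    subst hd
    refine List.isChain_cons_cons.mpr ⟨?_, h⟩
    show c.isR ≠ Letter.isR S
    rw [hc]
    simp [Letter.isR]

lemma valid_head_not_S {c : Letter} {t : List Letter} (h : Valid (c :: t)) (hc : c.isR = true) :
    ∀ d ∈ t.head?, d = S := by
  match t with
  | [] => simp
  | d :: t' =>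
    intro e he
    have hed : d = e := by simpa using he
    subst hed
    have hOk := (List.isChain_cons_cons.mp h).1
    cases d with
    | S => rfl
    | R1 => exact absurd hc hOk
    | R2 => exact absurd hc hOk

lemma valid_rL {l : List Letter} (h : Valid l) : Valid (rL l) := by
  match l with
  | [] => simp [rL, Valid, List.Chain']
  | S :: t => exact List.isChain_cons_cons.mpr ⟨by simp [Ok, Letter.isR], h⟩
  | R1 :: t => exact valid_cons_r rfl h.tail (valid_head_not_S h rfl)
  | R2 :: t => exact h.tail

lemma valid_r2L {l : List Letter} (h : Valid l) : Valid (r2L l) := by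
  match l with
  | [] => simp [r2L, Valid, List.Chain']
  | S :: t => exact List.isChain_cons_cons.mpr ⟨by simp [Ok, Letter.isR], h⟩
  | R1 :: t => exact h.tail
  | R2 :: t => exact valid_cons_r rfl h.tail (valid_head_not_S h rfl)

-- heads of valid tails after an S are r-type or nothing
lemma tail_after_S {t : List Letter} (h : Valid (S :: t)) :
    t = [] ∨ (∃ u, t = R1 :: u) ∨ (∃ u, t = R2 :: u) := by
  match t with
  | [] => exact Or.inl rfl
  | S :: u =>
    have := (List.isChain_cons_cons.mp h).1
    simp [Ok, Letter.isR] at this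
  | R1 :: u => exact Or.inr (Or.inl ⟨u, rfl⟩)
  | R2 :: u => exact Or.inr (Or.inr ⟨u, rfl⟩)

lemma tail_after_r {c : Letter} {t : List Letter} (hc : c.isR = true) (h : Valid (c :: t)) :
    t = [] ∨ (∃ u, t = S :: u) := by
  match t with
  | [] => exact Or.inl rfl
  | d :: u =>
    have hd := valid_head_not_S h hc d rfl
    exact Or.inr ⟨u, by rw [hd]⟩

lemma sL_sL {l : List Letter} (h : Valid l) : sL (sL l) = l := by
  match l with
  | [] => rfl
  | S :: t =>
    show sL t = S :: t
    rcases tail_after_S h with h1 | ⟨u, h2⟩ | ⟨u, h2⟩ <;> subst_vars <;> rfl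
  | R1 :: t => rfl
  | R2 :: t => rfl

lemma rL_r2L {l : List Letter} (h : Valid l) : rL (r2L l) = l := by
  match l with
  | [] => rfl
  | S :: t => rfl
  | R1 :: t =>
    show rL t = R1 :: t
    rcases tail_after_r (c := R1) rfl h with h1 | ⟨u, h2⟩ <;> subst_vars <;> rfl
  | R2 :: t => rfl

lemma r2L_rL {l : List Letter} (h : Valid l) : r2L (rL l) = l := by
  match l with
  | [] => rfl
  | S :: t => rfl
  | R1 :: t => rfl
  | R2 :: t =>
    show r2L t = R2 :: t
    rcases tail_after_r (c := R2) rfl h with h1 | ⟨u, h2⟩ <;> subst_vars <;> rfl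

lemma r2L_r2L_r2L {l : List Letter} (h : Valid l) : r2L (r2L (r2L l)) = l := by
  match l with
  | [] => rfl
  | S :: t => rfl
  | R1 :: t =>
    show r2L (r2L t) = R1 :: t
    rcases tail_after_r (c := R1) rfl h with h1 | ⟨u, h2⟩ <;> subst_vars <;> rfl
  | R2 :: t =>
    show r2L (r2L (R1 :: t)) = R2 :: t
    show r2L t = R2 :: t
    rcases tail_after_r (c := R2) rfl h with h1 | ⟨u, h2⟩ <;> subst_vars <;> rfl

def sE : Equiv.Perm W where
  toFun w := ⟨sL w.1, valid_sL w.2⟩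
  invFun w := ⟨sL w.1, valid_sL w.2⟩
  left_inv w := Subtype.ext (sL_sL w.2)
  right_inv w := Subtype.ext (sL_sL w.2)

def r2E : Equiv.Perm W where
  toFun w := ⟨r2L w.1, valid_r2L w.2⟩
  invFun w := ⟨rL w.1, valid_rL w.2⟩
  left_inv w := Subtype.ext (rL_r2L w.2)
  right_inv w := Subtype.ext (r2L_rL w.2)

/-- left multiplication by `a = r²s` -/
def aP : Equiv.Perm W := sE.trans r2E
/-- left multiplication by `b = s r²` -/
def bP : Equiv.Perm W := r2E.trans sE

lemma aP_apply (w : W) : (aP w).1 = r2L (sL w.1) := rfl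
lemma bP_apply (w : W) : (bP w).1 = sL (r2L w.1) := rfl
lemma aP_inv_apply (w : W) : (aP⁻¹ w).1 = sL (rL w.1) := rfl
lemma bP_inv_apply (w : W) : (bP⁻¹ w).1 = rL (sL w.1) := rfl

lemma braidP : aP * bP * aP = bP * aP * bP := by
  apply Equiv.ext
  intro w
  apply Subtype.ext
  show (aP (bP (aP w))).1 = (bP (aP (bP w))).1
  have h1 : (aP (bP (aP w))).1 = r2L (sL (sL (r2L (r2L (sL w.1))))) := rfl
  have h2 : (bP (aP (bP w))).1 = sL (r2L (r2L (sL (sL (r2L w.1))))) := rfl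
  rw [h1, h2]
  rw [sL_sL (valid_r2L (valid_r2L (valid_sL w.2)))]
  rw [sL_sL (valid_r2L w.2)]
  have e1 : r2L (r2L (r2L (sL w.1))) = sL w.1 := r2L_r2L_r2L (valid_sL w.2)
  have e2 : sL (r2L (r2L (r2L w.1))) = sL w.1 := by rw [r2L_r2L_r2L w.2]
  rw [e1, e2]

end B3X

namespace B3X
open Letter

noncomputable instance : Countable (FreeGroup (Fin 2)) :=
  Function.Injective.countable FreeGroup.toWord_injective

instance : Countable B3 :=
  Function.Surjective.countable (QuotientGroup.mk'_surjective (Subgroup.normalClosure braidRel))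

def Sset : Set B3 := {σ 0, (σ 0)⁻¹, σ 1, (σ 1)⁻¹}

lemma mem_Sset {x : B3} (hx : x ∈ Sset) :
    x = σ 0 ∨ x = (σ 0)⁻¹ ∨ x = σ 1 ∨ x = (σ 1)⁻¹ := by
  simpa [Sset] using hx

lemma inv_mem_Sset {x : B3} (hx : x ∈ Sset) : x⁻¹ ∈ Sset := by
  rcases mem_Sset hx with h | h | h | h <;> subst h <;> simp [Sset]

noncomputable def fgen : Fin 2 → Equiv.Perm W := ![aP, bP]

lemma relcheck : ∀ r ∈ braidRel, (FreeGroup.lift fgen) r = 1 := by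
  intro r hr
  have hr' : r = FreeGroup.of 0 * FreeGroup.of 1 * FreeGroup.of 0 *
      (FreeGroup.of 1)⁻¹ * (FreeGroup.of 0)⁻¹ * (FreeGroup.of 1)⁻¹ := hr
  subst hr'
  simp only [map_mul, map_inv, FreeGroup.lift_apply_of, fgen, Matrix.cons_val_zero, Matrix.cons_val_one,
    Matrix.head_cons]
  have h := braidP
  calc aP * bP * aP * bP⁻¹ * aP⁻¹ * bP⁻¹ = (aP * bP * aP) * (bP * aP * bP)⁻¹ := by group
    _ = (bP * aP * bP) * (bP * aP * bP)⁻¹ := by rw [h]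
    _ = 1 := by group

noncomputable def Ψ : B3 →* Equiv.Perm W := PresentedGroup.toGroup relcheck

lemma Ψ_σ0 : Ψ (σ 0) = aP := by
  show Ψ (PresentedGroup.of 0) = aP
  rw [Ψ, PresentedGroup.toGroup.of]
  rfl

lemma Ψ_σ1 : Ψ (σ 1) = bP := by
  show Ψ (PresentedGroup.of 1) = bP
  rw [Ψ, PresentedGroup.toGroup.of]
  rfl

def emptyW : W := ⟨[], List.isChain_nil⟩

noncomputable def NF (g : B3) : W := Ψ g emptyW

lemma NF_one : NF 1 = emptyW := by simp [NF]

lemma NF_mul_σ0 (g : B3) : NF (σ 0 * g) = aP (NF g) := by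
  simp [NF, map_mul, Ψ_σ0, Equiv.Perm.mul_apply]

lemma NF_mul_σ1 (g : B3) : NF (σ 1 * g) = bP (NF g) := by
  simp [NF, map_mul, Ψ_σ1, Equiv.Perm.mul_apply]

lemma NF_mul_σ0inv (g : B3) : NF ((σ 0)⁻¹ * g) = aP⁻¹ (NF g) := by
  simp [NF, map_mul, map_inv, Ψ_σ0, Equiv.Perm.mul_apply]

lemma NF_mul_σ1inv (g : B3) : NF ((σ 1)⁻¹ * g) = bP⁻¹ (NF g) := by
  simp [NF, map_mul, map_inv, Ψ_σ1, Equiv.Perm.mul_apply]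

/-- number of `r`-type letters -/
def rc (l : List Letter) : ℕ := l.countP (fun c => c.isR)

@[simp] lemma rc_nil : rc [] = 0 := rfl
@[simp] lemma rc_cons (c : Letter) (l : List Letter) :
    rc (c :: l) = rc l + (if c.isR then 1 else 0) := by
  simp [rc, List.countP_cons]

lemma rc_sL (l : List Letter) : rc (sL l) = rc l := by
  match l with
  | [] => rfl
  | S :: t => simp [sL, Letter.isR]
  | R1 :: t => simp [sL, Letter.isR]
  | R2 :: t => simp [sL, Letter.isR]

lemma rc_rL_le (l : List Letter) : rc (rL l) ≤ rc l + 1 := by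
  match l with
  | [] => simp [rL, rc, Letter.isR]
  | S :: t => simp [rL, Letter.isR]
  | R1 :: t => simp [rL, Letter.isR]
  | R2 :: t => simp [rL, Letter.isR]; omega

lemma rc_r2L_le (l : List Letter) : rc (r2L l) ≤ rc l + 1 := by
  match l with
  | [] => simp [r2L, rc, Letter.isR]
  | S :: t => simp [r2L, Letter.isR]
  | R1 :: t => simp [r2L, Letter.isR]; omega
  | R2 :: t => simp [r2L, Letter.isR]

lemma rc_step {x : B3} (hx : x ∈ Sset) (g : B3) :
    rc (NF (x * g)).1 ≤ rc (NF g).1 + 1 := by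
  rcases mem_Sset hx with h | h | h | h <;> subst h
  · rw [NF_mul_σ0]
    calc rc (r2L (sL (NF g).1)) ≤ rc (sL (NF g).1) + 1 := rc_r2L_le _
      _ = rc (NF g).1 + 1 := by rw [rc_sL]
  · rw [NF_mul_σ0inv]
    show rc (sL (rL (NF g).1)) ≤ _
    rw [rc_sL]
    exact rc_rL_le _
  · rw [NF_mul_σ1]
    show rc (sL (r2L (NF g).1)) ≤ _
    rw [rc_sL]
    exact rc_r2L_le _
  · rw [NF_mul_σ1inv]
    calc rc (rL (sL (NF g).1)) ≤ rc (sL (NF g).1) + 1 := rc_rL_le _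
      _ = rc (NF g).1 + 1 := by rw [rc_sL]

lemma rc_le_length : ∀ l : List B3, (∀ x ∈ l, x ∈ Sset) → rc (NF l.prod).1 ≤ l.length := by
  intro l
  induction l with
  | nil => intro _; simp [NF_one, emptyW]
  | cons x l ih =>
    intro hl
    rw [List.prod_cons]
    calc rc (NF (x * l.prod)).1 ≤ rc (NF l.prod).1 + 1 :=
          rc_step (hl x (List.mem_cons_self)) _
      _ ≤ l.length + 1 := by
          have := ih (fun y hy => hl y (List.mem_cons_of_mem x hy))
          omega
      _ = (x :: l).length := by simp

end B3X

namespace B3X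
open Letter

/-- block words -/
def blkR (c : Letter) : ℕ → List Letter
  | 0 => []
  | n + 1 => c :: S :: blkR c n

def blk (p q : ℕ) : List Letter := blkR R2 p ++ blkR R1 q

lemma blk_succ_p (p q : ℕ) : blk (p + 1) q = R2 :: S :: blk p q := rfl

lemma blk_zero_succ (q : ℕ) : blk 0 (q + 1) = R1 :: S :: blk 0 q := rfl

lemma blk_nil : blk 0 0 = [] := rfl

lemma blkR_length (c : Letter) (n : ℕ) : (blkR c n).length = 2 * n := by
  induction n with
  | zero => rfl
  | succ n ih => simp [blkR, ih]; omega

lemma blk_length (p q : ℕ) : (blk p q).length = 2 * (p + q) := by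
  simp [blk, blkR_length]; omega

lemma rc_blkR_R2 (n : ℕ) : rc (blkR R2 n) = n := by
  induction n with
  | zero => rfl
  | succ n ih => simp [blkR, Letter.isR, ih]

lemma rc_append (l₁ l₂ : List Letter) : rc (l₁ ++ l₂) = rc l₁ + rc l₂ := by
  simp [rc, List.countP_append]

lemma rc_blkR_R1 (n : ℕ) : rc (blkR R1 n) = n := by
  induction n with
  | zero => rfl
  | succ n ih => simp [blkR, Letter.isR, ih]

lemma rc_blk (p q : ℕ) : rc (blk p q) = p + q := by
  simp [blk, rc_append, rc_blkR_R2, rc_blkR_R1]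

/-- the head of `blk` is never `S` -/
lemma blk_head (p q : ℕ) :
    blk p q = [] ∨ (∃ u, blk p q = R1 :: u) ∨ (∃ u, blk p q = R2 :: u) := by
  match p, q with
  | 0, 0 => exact Or.inl rfl
  | 0, q + 1 => exact Or.inr (Or.inl ⟨S :: blk 0 q, rfl⟩)
  | p + 1, q => exact Or.inr (Or.inr ⟨S :: blk p q, rfl⟩)

/- exact-step lemmas -/
lemma cA_raw {v : List Letter} (hv : Valid v) (h : rc (r2L (sL v)) = rc v + 1) :
    r2L (sL v) = R2 :: S :: v ∨ (v = [S] ∧ r2L (sL v) = [R2]) := by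
  match v with
  | [] => exact Or.inl rfl
  | S :: t =>
    rcases tail_after_S hv with h1 | ⟨u, h2⟩ | ⟨u, h2⟩
    · subst h1; exact Or.inr ⟨rfl, rfl⟩
    · subst h2
      exfalso
      have : r2L (sL (S :: R1 :: u)) = u := rfl
      rw [this] at h
      simp [Letter.isR] at h
      omega
    · subst h2
      exfalso
      have : r2L (sL (S :: R2 :: u)) = R1 :: u := rfl
      rw [this] at h
      simp [Letter.isR] at h
  | R1 :: t => exact Or.inl rfl
  | R2 :: t => exact Or.inl rfl

lemma cBinv_raw {v : List Letter} (hv : Valid v) (h : rc (rL (sL v)) = rc v + 1) :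
    rL (sL v) = R1 :: S :: v ∨ (v = [S] ∧ rL (sL v) = [R1]) := by
  match v with
  | [] => exact Or.inl rfl
  | S :: t =>
    rcases tail_after_S hv with h1 | ⟨u, h2⟩ | ⟨u, h2⟩
    · subst h1; exact Or.inr ⟨rfl, rfl⟩
    · subst h2
      exfalso
      have : rL (sL (S :: R1 :: u)) = R2 :: u := rfl
      rw [this] at h
      simp [Letter.isR] at h
    · subst h2
      exfalso
      have : rL (sL (S :: R2 :: u)) = u := rfl
      rw [this] at h
      simp [Letter.isR] at h
      omega
  | R1 :: t => exact Or.inl rfl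
  | R2 :: t => exact Or.inl rfl

lemma cAinv_raw {v : List Letter} (hv : Valid v) (h : rc (sL (rL v)) = rc v + 1) :
    sL (rL v) = S :: R1 :: v := by
  match v with
  | [] => rfl
  | S :: t => rfl
  | R1 :: t =>
    exfalso
    have : sL (rL (R1 :: t)) = S :: R2 :: t := rfl
    rw [this] at h
    simp [Letter.isR] at h
  | R2 :: t =>
    exfalso
    have : rL (R2 :: t) = t := rfl
    rw [rL] at h
    rw [rc_sL] at h
    simp [Letter.isR] at h
    omega

lemma cB_raw {v : List Letter} (hv : Valid v) (h : rc (sL (r2L v)) = rc v + 1) :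
    sL (r2L v) = S :: R2 :: v := by
  match v with
  | [] => rfl
  | S :: t => rfl
  | R1 :: t =>
    exfalso
    rw [r2L] at h
    rw [rc_sL] at h
    simp [Letter.isR] at h
    omega
  | R2 :: t =>
    exfalso
    have : sL (r2L (R2 :: t)) = S :: R1 :: t := rfl
    rw [this] at h
    simp [Letter.isR] at h

/-- Uniqueness of maximal words: if the normal form of `l.prod` consists of `p` blocks `R2 S`
followed by `q` blocks `R1 S`, and `l` has exactly `p + q` letters, then
`l = σ0^p · (σ1⁻¹)^q` letterwise. -/
lemma LB : ∀ (l : List B3), (∀ x ∈ l, x ∈ Sset) → ∀ p q : ℕ, (NF l.prod).1 = blk p q →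
    p + q = l.length → l = List.replicate p (σ 0) ++ List.replicate q ((σ 1)⁻¹) := by
  intro l
  induction l with
  | nil =>
    intro _ p q hNF hlen
    simp at hlen
    have hp : p = 0 := by omega
    have hq : q = 0 := by omega
    subst hp; subst hq
    rfl
  | cons x l ih =>
    intro hmem p q hNF hlen
    have hx : x ∈ Sset := hmem x (List.mem_cons_self)
    have hmem' : ∀ y ∈ l, y ∈ Sset := fun y hy => hmem y (List.mem_cons_of_mem x hy)
    have hlen' : p + q = l.length + 1 := by simpa using hlen
    have hprod : (x :: l).prod = x * l.prod := List.prod_cons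
    set v : W := NF l.prod with hv
    have hLA : rc v.1 ≤ l.length := rc_le_length l hmem'
    have hrc_top : rc (NF ((x :: l).prod)).1 = p + q := by rw [hNF, rc_blk]
    have hstep_le : rc (NF ((x :: l).prod)).1 ≤ rc v.1 + 1 := by
      rw [hprod]; exact rc_step hx _
    have hE2 : rc (NF (x * l.prod)).1 = rc v.1 + 1 := by
      rw [← hprod]; omega
    have hE1 : rc v.1 = l.length := by omega
    have hlen_blk : (blk p q).length = 2 * (p + q) := blk_length p q
    rcases mem_Sset hx with h | h | h | h <;> subst h
    · -- x = σ 0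
      rw [NF_mul_σ0] at hE2
      have hE2' : rc (r2L (sL v.1)) = rc v.1 + 1 := hE2
      rcases cA_raw v.2 hE2' with hsh | ⟨hvS, hsh⟩
      · -- shape R2 :: S :: v
        have hblk : blk p q = R2 :: S :: v.1 := by
          rw [← hNF, hprod, NF_mul_σ0]
          exact hsh
        match p, hblk with
        | 0, hblk =>
          exfalso
          match q, hblk with
          | 0, hblk => exact absurd hblk (by simp [blk_nil])
          | q + 1, hblk =>
            rw [blk_zero_succ] at hblk
            exact absurd hblk (by simp)
        | p + 1, hblk =>
          rw [blk_succ_p] at hblk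
          have hv' : v.1 = blk p q := by
            injection hblk with _ h2; injection h2 with _ h3; exact h3.symm
          have := ih hmem' p q hv' (by omega)
          rw [this]
          rfl
      · -- exceptional: impossible by length
        exfalso
        have hblk : blk p q = [R2] := by
          rw [← hNF, hprod, NF_mul_σ0]; exact hsh
        have := blk_length p q
        rw [hblk] at this
        simp at this
        omega
    · -- x = (σ 0)⁻¹ : impossible, head would be S
      exfalso
      rw [NF_mul_σ0inv] at hE2
      have hsh := cAinv_raw v.2 hE2
      have hblk : blk p q = S :: R1 :: v.1 := by
        rw [← hNF, hprod, NF_mul_σ0inv]; exact hsh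
      rcases blk_head p q with h1 | ⟨u, h2⟩ | ⟨u, h2⟩
      · rw [h1] at hblk; exact absurd hblk (by simp)
      · rw [h2] at hblk; exact absurd hblk (by simp)
      · rw [h2] at hblk; exact absurd hblk (by simp)
    · -- x = σ 1 : impossible, head would be S
      exfalso
      rw [NF_mul_σ1] at hE2
      have hsh := cB_raw v.2 hE2
      have hblk : blk p q = S :: R2 :: v.1 := by
        rw [← hNF, hprod, NF_mul_σ1]; exact hsh
      rcases blk_head p q with h1 | ⟨u, h2⟩ | ⟨u, h2⟩
      · rw [h1] at hblk; exact absurd hblk (by simp)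
      · rw [h2] at hblk; exact absurd hblk (by simp)
      · rw [h2] at hblk; exact absurd hblk (by simp)
    · -- x = (σ 1)⁻¹
      rw [NF_mul_σ1inv] at hE2
      have hE2' : rc (rL (sL v.1)) = rc v.1 + 1 := hE2
      rcases cBinv_raw v.2 hE2' with hsh | ⟨hvS, hsh⟩
      · have hblk : blk p q = R1 :: S :: v.1 := by
          rw [← hNF, hprod, NF_mul_σ1inv]
          exact hsh
        match p, q, hblk with
        | 0, 0, hblk => exact absurd hblk (by simp [blk_nil])
        | 0, q + 1, hblk =>
          rw [blk_zero_succ] at hblk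
          have hv' : v.1 = blk 0 q := by
            injection hblk with _ h2; injection h2 with _ h3; exact h3.symm
          have := ih hmem' 0 q hv' (by omega)
          rw [this]
          rfl
        | p + 1, q, hblk =>
          exfalso
          rw [blk_succ_p] at hblk
          exact absurd hblk (by simp)
      · exfalso
        have hblk : blk p q = [R1] := by
          rw [← hNF, hprod, NF_mul_σ1inv]; exact hsh
        have := blk_length p q
        rw [hblk] at this
        simp at this
        omega

end B3X

namespace B3X
open Letter

/-- word length -/
noncomputable def ell (g : B3) : ℕ := wordDist Sset 1 g

lemma wordDist_eq (g h : B3) : wordDist Sset g h = ell (g⁻¹ * h) := by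
  unfold ell wordDist
  simp only [inv_one, one_mul]

lemma exists_list (g : B3) : ∃ l : List B3, (∀ x ∈ l, x ∈ Sset) ∧ l.prod = g := by
  obtain ⟨f, rfl⟩ := QuotientGroup.mk'_surjective (Subgroup.normalClosure braidRel) g
  induction f using FreeGroup.induction_on with
  | C1 => exact ⟨[], by simp, by simp; rfl⟩
  | of i =>
    refine ⟨[σ i], by intro x hx; fin_cases i <;> simp_all [Sset], by simp; rfl⟩
  | inv_of i ih =>
    obtain ⟨l, hmem, hprod⟩ := ih
    refine ⟨(l.map (fun y => y⁻¹)).reverse, ?_, ?_⟩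
    · intro y hy
      simp only [List.mem_reverse, List.mem_map] at hy
      obtain ⟨z, hz, rfl⟩ := hy
      exact inv_mem_Sset (hmem z hz)
    · rw [← List.prod_inv_reverse, hprod, map_inv]; rfl
  | mul u v ihu ihv =>
    obtain ⟨l₁, hm₁, hp₁⟩ := ihu
    obtain ⟨l₂, hm₂, hp₂⟩ := ihv
    refine ⟨l₁ ++ l₂, ?_, ?_⟩
    · intro y hy
      rcases List.mem_append.mp hy with h | h
      exacts [hm₁ y h, hm₂ y h]
    · rw [List.prod_append, hp₁, hp₂, map_mul]; rfl

lemma ellSet_nonempty (g : B3) :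
    {n | ∃ l : List B3, l.length = n ∧ (∀ x ∈ l, x ∈ Sset) ∧ l.prod = 1⁻¹ * g}.Nonempty := by
  obtain ⟨l, hmem, hprod⟩ := exists_list g
  exact ⟨l.length, l, rfl, hmem, by rw [hprod]; simp⟩

lemma ell_le {g : B3} {l : List B3} (hmem : ∀ x ∈ l, x ∈ Sset) (hprod : l.prod = g) :
    ell g ≤ l.length :=
  Nat.sInf_le ⟨l, rfl, hmem, by rw [hprod]; simp⟩

lemma ell_spec (g : B3) : ∃ l : List B3, (∀ x ∈ l, x ∈ Sset) ∧ l.prod = g ∧ l.length = ell g := by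
  have h := Nat.sInf_mem (ellSet_nonempty g)
  obtain ⟨l, hl, hmem, hprod⟩ := h
  exact ⟨l, hmem, by rw [hprod]; simp, hl⟩

lemma ell_one : ell 1 = 0 :=
  Nat.le_zero.mp (ell_le (g := 1) (l := []) (by simp) (by simp))

lemma ell_mul_le (g h : B3) : ell (g * h) ≤ ell g + ell h := by
  obtain ⟨l₁, hm₁, hp₁, hl₁⟩ := ell_spec g
  obtain ⟨l₂, hm₂, hp₂, hl₂⟩ := ell_spec h
  have := ell_le (g := g * h) (l := l₁ ++ l₂)
    (by intro y hy; rcases List.mem_append.mp hy with h | h; exacts [hm₁ y h, hm₂ y h])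
    (by rw [List.prod_append, hp₁, hp₂])
  simpa [hl₁, hl₂] using this

lemma ell_inv_le (g : B3) : ell g⁻¹ ≤ ell g := by
  obtain ⟨l, hm, hp, hl⟩ := ell_spec g
  have := ell_le (g := g⁻¹) (l := (l.map (fun y => y⁻¹)).reverse)
    (by intro y hy
        simp only [List.mem_reverse, List.mem_map] at hy
        obtain ⟨z, hz, rfl⟩ := hy
        exact inv_mem_Sset (hm z hz))
    (by rw [← List.prod_inv_reverse, hp])
  simpa [hl] using this

lemma ell_inv (g : B3) : ell g⁻¹ = ell g :=
  le_antisymm (ell_inv_le g) (by simpa using ell_inv_le g⁻¹)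

/- braid relation in B3 -/
lemma braidB3 : σ 0 * σ 1 * σ 0 = σ 1 * σ 0 * σ 1 := by
  have h1 : (QuotientGroup.mk (FreeGroup.of 0 * FreeGroup.of 1 * FreeGroup.of 0 *
      (FreeGroup.of 1)⁻¹ * (FreeGroup.of 0)⁻¹ * (FreeGroup.of 1)⁻¹) :
      FreeGroup (Fin 2) ⧸ Subgroup.normalClosure braidRel) = 1 :=
    (QuotientGroup.eq_one_iff _).mpr (Subgroup.subset_normalClosure rfl)
  have h2 : σ 0 * σ 1 * σ 0 * (σ 1)⁻¹ * (σ 0)⁻¹ * (σ 1)⁻¹ = (1 : B3) := h1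
  have h3 : (σ 0 * σ 1 * σ 0) * (σ 1 * σ 0 * σ 1)⁻¹ = (1 : B3) := by
    rw [← h2]; group
  exact mul_inv_eq_one.mp h3

/-- the family `x n = σ₀ⁿ σ₁⁻ⁿ` -/
noncomputable def xx (n : ℕ) : B3 := (σ 0)^n * ((σ 1)^n)⁻¹

lemma xx_zero : xx 0 = 1 := by simp [xx]

/- normal form of xx -/
lemma bPinv_blk (q : ℕ) : rL (sL (blk 0 q)) = blk 0 (q + 1) := by
  cases q <;> rfl

lemma aP_blk (p q : ℕ) : r2L (sL (blk p q)) = blk (p + 1) q := by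
  cases p with
  | zero => cases q <;> rfl
  | succ p => rfl

lemma NF_binv_pow (q : ℕ) : (NF (((σ 1)^q)⁻¹)).1 = blk 0 q := by
  induction q with
  | zero => simp [NF_one, emptyW, blk, blkR]
  | succ q ih =>
    have : ((σ 1)^(q+1))⁻¹ = (σ 1)⁻¹ * ((σ 1)^q)⁻¹ := by
      rw [pow_succ]; group
    rw [this, NF_mul_σ1inv]
    show rL (sL (NF ((σ 1)^q)⁻¹).1) = _
    rw [ih, bPinv_blk]

lemma NF_xx_gen (p q : ℕ) : (NF ((σ 0)^p * ((σ 1)^q)⁻¹)).1 = blk p q := by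
  induction p with
  | zero => simpa using NF_binv_pow q
  | succ p ih =>
    have : (σ 0)^(p+1) * ((σ 1)^q)⁻¹ = σ 0 * ((σ 0)^p * ((σ 1)^q)⁻¹) := by
      rw [pow_succ']; group
    rw [this, NF_mul_σ0]
    show r2L (sL (NF ((σ 0)^p * ((σ 1)^q)⁻¹)).1) = _
    rw [ih, aP_blk]

lemma NF_xx (n : ℕ) : (NF (xx n)).1 = blk n n := NF_xx_gen n n

/-- (A) the word length of `xx n` is `2n` -/
lemma ell_xx (n : ℕ) : ell (xx n) = 2 * n := by
  apply le_antisymm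
  · have hprod : (List.replicate n (σ 0) ++ List.replicate n ((σ 1)⁻¹)).prod = xx n := by
      rw [List.prod_append, List.prod_replicate, List.prod_replicate, inv_pow]
      rfl
    have hmem : ∀ y ∈ List.replicate n (σ 0) ++ List.replicate n ((σ 1)⁻¹), y ∈ Sset := by
      intro y hy
      rcases List.mem_append.mp hy with h | h <;>
        rw [List.eq_of_mem_replicate h] <;> simp [Sset]
    have := ell_le hmem hprod
    simp at this
    omega
  · obtain ⟨l, hm, hp, hl⟩ := ell_spec (xx n)
    have h1 := rc_le_length l hm
    rw [hp, NF_xx, rc_blk] at h1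
    omega

/-- (B) rigidity: elements on geodesics to `xx n` are powers of `σ 0`. -/
lemma rigid {g : B3} {m n : ℕ} (hm : ell g = m) (h2 : ell (g⁻¹ * xx n) = 2*n - m)
    (hmn : m ≤ n) : g = (σ 0)^m := by
  obtain ⟨l₁, hm₁, hp₁, hl₁⟩ := ell_spec g
  obtain ⟨l₂, hm₂, hp₂, hl₂⟩ := ell_spec (g⁻¹ * xx n)
  have hprod : (l₁ ++ l₂).prod = xx n := by
    rw [List.prod_append, hp₁, hp₂]
    group
  have hmemall : ∀ y ∈ l₁ ++ l₂, y ∈ Sset := by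
    intro y hy; rcases List.mem_append.mp hy with h | h; exacts [hm₁ y h, hm₂ y h]
  have hlen : n + n = (l₁ ++ l₂).length := by
    simp [hl₁, hl₂, hm, h2]
    omega
  have hL := LB (l₁ ++ l₂) hmemall n n (by rw [hprod, NF_xx]) hlen
  have htake : l₁ = List.replicate m (σ 0) := by
    have h1 : l₁ = (l₁ ++ l₂).take l₁.length := (List.take_left (l₁ := l₁) (l₂ := l₂)).symm
    rw [hL] at h1
    rw [hl₁, hm] at h1
    rw [List.take_append_of_le_length (by simp; omega), List.take_replicate] at h1
    simpa [Nat.min_eq_left hmn] using h1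
  rw [← hp₁, htake, List.prod_replicate]

/- exponent-sum homomorphism -/
lemma relcheckE : ∀ r ∈ braidRel,
    (FreeGroup.lift (fun _ : Fin 2 => Multiplicative.ofAdd (1 : ℤ))) r = 1 := by
  intro r hr
  have hr' : r = FreeGroup.of 0 * FreeGroup.of 1 * FreeGroup.of 0 *
      (FreeGroup.of 1)⁻¹ * (FreeGroup.of 0)⁻¹ * (FreeGroup.of 1)⁻¹ := hr
  subst hr'
  simp only [map_mul, map_inv, FreeGroup.lift_apply_of]
  group

noncomputable def Eh : B3 →* Multiplicative ℤ := PresentedGroup.toGroup relcheckE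

lemma Eh_σ (i : Fin 2) : Eh (σ i) = Multiplicative.ofAdd 1 := by
  show Eh (PresentedGroup.of i) = _
  rw [Eh, PresentedGroup.toGroup.of]

/-- abelianized exponent sum -/
noncomputable def ee (g : B3) : ℤ := Multiplicative.toAdd (Eh g)

lemma ee_mul (g h : B3) : ee (g * h) = ee g + ee h := by
  simp [ee, map_mul]

lemma ee_gen {x : B3} (hx : x ∈ Sset) : ee x = 1 ∨ ee x = -1 := by
  rcases mem_Sset hx with h | h | h | h <;> subst h <;>
    simp [ee, map_inv, Eh_σ]

lemma abs_ee_le (l : List B3) (hmem : ∀ x ∈ l, x ∈ Sset) : |ee l.prod| ≤ (l.length : ℤ) := by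
  induction l with
  | nil => simp [ee, map_one]
  | cons x l ih =>
    rw [List.prod_cons, ee_mul]
    have h1 := ih (fun y hy => hmem y (List.mem_cons_of_mem x hy))
    have h2 := ee_gen (hmem x (List.mem_cons_self))
    have h3 : |ee x| = 1 := by rcases h2 with h | h <;> rw [h] <;> simp
    have h4 : |ee x + ee l.prod| ≤ |ee x| + |ee l.prod| := abs_add_le _ _
    rw [h3] at h4
    simp only [List.length_cons]
    push_cast
    omega

lemma abs_ee_le_ell (g : B3) : |ee g| ≤ (ell g : ℤ) := by
  obtain ⟨l, hm, hp, hl⟩ := ell_spec g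
  have h := abs_ee_le l hm
  rw [hp, hl] at h
  exact h

/-- (E) `ℓ(σ₀σ₁·σ₀^m) = m + 2`. -/
lemma ell_abam (m : ℕ) : ell (σ 0 * σ 1 * (σ 0)^m) = m + 2 := by
  apply le_antisymm
  · have hprod : ([σ 0, σ 1] ++ List.replicate m (σ 0)).prod = σ 0 * σ 1 * (σ 0)^m := by
      simp [List.prod_append, mul_assoc]
    have hmem : ∀ y ∈ [σ 0, σ 1] ++ List.replicate m (σ 0), y ∈ Sset := by
      intro y hy
      rcases List.mem_append.mp hy with h | h
      · rcases List.mem_cons.mp h with h' | h'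
        · subst h'; simp [Sset]
        · have h'' : y = σ 1 := by simpa using h'
          subst h''; simp [Sset]
      · rw [List.eq_of_mem_replicate h]; simp [Sset]
    have := ell_le hmem hprod
    simp at this
    omega
  · have he : ee (σ 0 * σ 1 * (σ 0)^m) = (m : ℤ) + 2 := by
      simp [ee, map_mul, map_pow, Eh_σ]
      push_cast
      ring
    have := abs_ee_le_ell (σ 0 * σ 1 * (σ 0)^m)
    rw [he] at this
    have h2 : ((m : ℤ) + 2) ≤ (ell (σ 0 * σ 1 * (σ 0)^m) : ℤ) := by
      have : |(m : ℤ) + 2| = (m : ℤ) + 2 := abs_of_nonneg (by positivity)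
      omega
    exact_mod_cast h2

/-- (D) upper bound `ℓ(σ₀σ₁·xx (n+1)) ≤ 2(n+1)`. -/
lemma keyIdent (n : ℕ) : σ 0 * σ 1 * xx (n+1) = (σ 1)^(n+1) * σ 0 * ((σ 1)^n)⁻¹ := by
  induction n with
  | zero =>
    show σ 0 * σ 1 * ((σ 0)^1 * ((σ 1)^1)⁻¹) = _
    simp only [pow_one, pow_zero, inv_one, mul_one]
    have := braidB3
    calc σ 0 * σ 1 * (σ 0 * (σ 1)⁻¹) = (σ 0 * σ 1 * σ 0) * (σ 1)⁻¹ := by group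
      _ = (σ 1 * σ 0 * σ 1) * (σ 1)⁻¹ := by rw [braidB3]
      _ = σ 1 * σ 0 := by group
  | succ n ih =>
    have step1 : xx (n+2) = σ 0 * xx (n+1) * (σ 1)⁻¹ := by
      unfold xx
      rw [pow_succ' (σ 0) (n+1), pow_succ (σ 1) (n+1)]
      group
    calc σ 0 * σ 1 * xx (n+2) = (σ 0 * σ 1 * σ 0) * xx (n+1) * (σ 1)⁻¹ := by
          rw [step1]; group
      _ = (σ 1 * σ 0 * σ 1) * xx (n+1) * (σ 1)⁻¹ := by rw [braidB3]
      _ = σ 1 * (σ 0 * σ 1 * xx (n+1)) * (σ 1)⁻¹ := by group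
      _ = σ 1 * ((σ 1)^(n+1) * σ 0 * ((σ 1)^n)⁻¹) * (σ 1)⁻¹ := by rw [ih]
      _ = (σ 1)^(n+2) * σ 0 * ((σ 1)^(n+1))⁻¹ := by
          rw [pow_succ' (σ 1) (n+1), pow_succ (σ 1) n]; group

/-- (D) `ℓ(σ₀σ₁·xx n) ≤ 2n` for `n ≥ 1`. -/
lemma ell_ab_xx (n : ℕ) : ell (σ 0 * σ 1 * xx (n+1)) ≤ 2*(n+1) := by
  have hprod : (List.replicate (n+1) (σ 1) ++ [σ 0] ++ List.replicate n ((σ 1)⁻¹)).prod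
      = σ 0 * σ 1 * xx (n+1) := by
    rw [keyIdent n]
    rw [List.prod_append, List.prod_append, List.prod_replicate, List.prod_replicate]
    simp [inv_pow, mul_assoc]
  have hmem : ∀ y ∈ List.replicate (n+1) (σ 1) ++ [σ 0] ++ List.replicate n ((σ 1)⁻¹),
      y ∈ Sset := by
    intro y hy
    rcases List.mem_append.mp hy with h | h
    · rcases List.mem_append.mp h with h' | h'
      · rw [List.eq_of_mem_replicate h']; simp [Sset]
      · simp at h'; subst h'; simp [Sset]
    · rw [List.eq_of_mem_replicate h]; simp [Sset]
  have := ell_le hmem hprod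
  simp at this
  omega

end B3X

namespace B3X

/-- the normalized distance sequence -/
noncomputable def cseq (n : ℕ) (y : B3) : ℤ := (ell ((xx n)⁻¹ * y) : ℤ) - 2 * n

lemma cseq_bound (n : ℕ) (y : B3) : |cseq n y| ≤ (ell y : ℤ) := by
  have hub : ell ((xx n)⁻¹ * y) ≤ 2 * n + ell y := by
    have := ell_mul_le (xx n)⁻¹ y
    rw [ell_inv, ell_xx] at this
    exact this
  have hlb : 2 * n ≤ ell ((xx n)⁻¹ * y) + ell y := by
    have h1 : ell ((xx n)⁻¹) ≤ ell ((xx n)⁻¹ * y) + ell y⁻¹ := by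
      have := ell_mul_le ((xx n)⁻¹ * y) y⁻¹
      simpa [mul_assoc] using this
    rw [ell_inv, ell_xx, ell_inv] at h1
    exact h1
  rw [abs_le]
  constructor <;> [skip; skip] <;> unfold cseq <;> push_cast <;> omega

lemma stabilization :
    ∃ φ : ℕ → ℕ, StrictMono φ ∧ ∃ h : B3 → ℤ, ∀ y : B3, ∃ K : ℕ, ∀ k, K ≤ k →
      cseq (φ k) y = h y := by
  classical
  set Kset : Set (B3 → ℤ) := Set.univ.pi (fun y => Set.Icc (-(ell y : ℤ)) (ell y : ℤ)) with hKset
  have hcomp : IsCompact Kset :=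
    isCompact_univ_pi (fun y => (Set.finite_Icc _ _).isCompact)
  have hseq : IsSeqCompact Kset := hcomp.isSeqCompact
  have hmem : ∀ n, cseq n ∈ Kset := by
    intro n
    rw [hKset, Set.mem_univ_pi]
    intro y
    have := cseq_bound n y
    rw [abs_le] at this
    exact ⟨this.1, this.2⟩
  obtain ⟨a, _, φ, hφ, hconv⟩ := hseq hmem
  refine ⟨φ, hφ, a, ?_⟩
  intro y
  have h1 : Filter.Tendsto (fun k => cseq (φ k) y) Filter.atTop (nhds (a y)) :=
    tendsto_pi_nhds.mp hconv y
  rw [nhds_discrete] at h1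
  have h2 := Filter.tendsto_pure.mp h1
  rw [Filter.eventually_atTop] at h2
  obtain ⟨K, hK⟩ := h2
  exact ⟨K, hK⟩

end B3X


open B3X

/-- The metric boundary of the Cayley graph of `B₃` with generating set
`S = {σ₁, σ₁⁻¹, σ₂, σ₂⁻¹}` contains a point which is not a Busemann point: there is a
weakly-geodesic ray whose boundary limits differ from those of every geodesic ray at
some pair `y, z`. -/
theorem stmt17 :
    ∃ T : Set ℝ, ∃ γ : ℝ → B3, IsRayDomain T ∧
      WeaklyGeodesicRay (fun g h => (wordDist {σ 0, (σ 0)⁻¹, σ 1, (σ 1)⁻¹} g h : ℝ)) T γ ∧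
      ∀ (T' : Set ℝ) (γ' : ℝ → B3), IsRayDomain T' →
        GeodesicRay (fun g h => (wordDist {σ 0, (σ 0)⁻¹, σ 1, (σ 1)⁻¹} g h : ℝ)) T' γ' →
        ∃ (y z : B3) (L L' : ℝ),
          RayLimit (fun g h => (wordDist {σ 0, (σ 0)⁻¹, σ 1, (σ 1)⁻¹} g h : ℝ)) T γ y z L ∧
          RayLimit (fun g h => (wordDist {σ 0, (σ 0)⁻¹, σ 1, (σ 1)⁻¹} g h : ℝ)) T' γ' y z L' ∧
          L ≠ L' := by
  classical
  obtain ⟨φ, hφ, h, hstab⟩ := B3X.stabilization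
  have hD : ∀ g h' : B3, (wordDist {σ 0, (σ 0)⁻¹, σ 1, (σ 1)⁻¹} g h' : ℕ) = ell (g⁻¹ * h') :=
    fun g h' => wordDist_eq g h'
  -- the ray domain and the ray
  refine ⟨insert (0:ℝ) {t : ℝ | ∃ k : ℕ, t = 2 * (φ k : ℝ)},
    fun t : ℝ => if ht : ∃ k : ℕ, t = 2 * (φ k : ℝ) then xx (φ ht.choose) else 1, ?_, ?_, ?_⟩
  case _ =>
    -- IsRayDomain
    refine ⟨?_, Set.mem_insert _ _, ?_⟩
    · intro t ht
      rcases Set.mem_insert_iff.mp ht with rfl | ⟨k, rfl⟩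
      · exact Set.mem_Ici.mpr (le_refl 0)
      · exact Set.mem_Ici.mpr (by positivity)
    · intro M
      refine ⟨2 * (φ (⌈M⌉₊ + 1) : ℝ), Set.mem_insert_iff.mpr (Or.inr ⟨⌈M⌉₊ + 1, rfl⟩), ?_⟩
      have h1 : M ≤ (⌈M⌉₊ : ℝ) := Nat.le_ceil M
      have h2 : ⌈M⌉₊ + 1 ≤ φ (⌈M⌉₊ + 1) := hφ.le_apply
      have h3 : ((⌈M⌉₊ + 1 : ℕ) : ℝ) ≤ (φ (⌈M⌉₊ + 1) : ℝ) := Nat.cast_le.mpr h2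
      have h5 : (0:ℝ) ≤ (φ (⌈M⌉₊ + 1) : ℝ) := Nat.cast_nonneg _
      push_cast at h3
      linarith
  -- helper: value of γ on T beyond a threshold
  all_goals
    have hγval : ∀ (u : ℝ) (hu : ∃ k : ℕ, u = 2 * (φ k : ℝ)),
        (if ht : ∃ k : ℕ, u = 2 * (φ k : ℝ) then xx (φ ht.choose) else 1) = xx (φ hu.choose) :=
      fun u hu => dif_pos hu
  all_goals
    have hγat : ∀ k : ℕ,
        (fun t : ℝ => if ht : ∃ k : ℕ, t = 2 * (φ k : ℝ) then xx (φ ht.choose) else 1)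
          (2 * (φ k : ℝ)) = xx (φ k) := by
      intro k
      have hu : ∃ j : ℕ, 2 * (φ k : ℝ) = 2 * (φ j : ℝ) := ⟨k, rfl⟩
      simp only [hγval _ hu]
      congr 1
      have := hu.choose_spec
      have : (φ hu.choose : ℝ) = (φ k : ℝ) := by linarith
      exact_mod_cast this
  all_goals
    have hγ0 : (fun t : ℝ => if ht : ∃ k : ℕ, t = 2 * (φ k : ℝ) then xx (φ ht.choose) else 1) 0
        = 1 := by
      by_cases h0 : ∃ k : ℕ, (0:ℝ) = 2 * (φ k : ℝ)
      · simp only [hγval _ h0]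
        have hsp := h0.choose_spec
        have : (φ h0.choose : ℝ) = 0 := by linarith
        have : φ h0.choose = 0 := by exact_mod_cast this
        rw [this, xx_zero]
      · exact dif_neg h0
  -- membership decomposition for large elements of T
  all_goals
    have hTdec : ∀ (K : ℕ) (u : ℝ), u ∈ insert (0:ℝ) {t : ℝ | ∃ k : ℕ, t = 2 * (φ k : ℝ)} →
        2 * (φ K : ℝ) + 1 ≤ u → ∃ k : ℕ, K ≤ k ∧ u = 2 * (φ k : ℝ) := by
      intro K u hu hle
      rcases Set.mem_insert_iff.mp hu with rfl | ⟨k, rfl⟩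
      · exfalso
        have : (0:ℝ) ≤ 2 * (φ K : ℝ) := by positivity
        linarith
      · refine ⟨k, ?_, rfl⟩
        have hlt : (φ K : ℝ) < (φ k : ℝ) := by linarith
        have hlt' : φ K < φ k := by exact_mod_cast hlt
        exact le_of_lt (hφ.lt_iff_lt.mp hlt')
  case _ =>
    -- WeaklyGeodesicRay
    intro y ε hε
    obtain ⟨K, hK⟩ := hstab y
    refine ⟨2 * (φ K : ℝ) + 1, ?_⟩
    intro s hs t ht hNs hNt
    obtain ⟨ks, hks, rfl⟩ := hTdec K s hs hNs
    obtain ⟨kt, hkt, rfl⟩ := hTdec K t ht hNt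
    have hvs := hγat ks
    have hvt := hγat kt
    simp only [hvs, hvt, hγ0]
    constructor
    · -- |d(γ t, γ 0) - t| < ε
      have : (wordDist {σ 0, (σ 0)⁻¹, σ 1, (σ 1)⁻¹} (xx (φ kt)) 1 : ℕ) = 2 * (φ kt) := by
        rw [hD, mul_one, ell_inv, ell_xx]
      rw [this]
      push_cast
      simpa using hε
    · -- second condition
      have hvty : (wordDist {σ 0, (σ 0)⁻¹, σ 1, (σ 1)⁻¹} (xx (φ kt)) y : ℤ)
          = h y + 2 * (φ kt) := by
        have h1 := hK kt hkt
        unfold cseq at h1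
        have h2 : (wordDist {σ 0, (σ 0)⁻¹, σ 1, (σ 1)⁻¹} (xx (φ kt)) y : ℕ)
            = ell ((xx (φ kt))⁻¹ * y) := hD _ _
        push_cast [h2]
        omega
      have hvsy : (wordDist {σ 0, (σ 0)⁻¹, σ 1, (σ 1)⁻¹} (xx (φ ks)) y : ℤ)
          = h y + 2 * (φ ks) := by
        have h1 := hK ks hks
        unfold cseq at h1
        have h2 : (wordDist {σ 0, (σ 0)⁻¹, σ 1, (σ 1)⁻¹} (xx (φ ks)) y : ℕ)
            = ell ((xx (φ ks))⁻¹ * y) := hD _ _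
        push_cast [h2]
        omega
      have e1 : (wordDist {σ 0, (σ 0)⁻¹, σ 1, (σ 1)⁻¹} (xx (φ kt)) y : ℝ)
          = (h y : ℝ) + 2 * (φ kt : ℝ) := by exact_mod_cast hvty
      have e2 : (wordDist {σ 0, (σ 0)⁻¹, σ 1, (σ 1)⁻¹} (xx (φ ks)) y : ℝ)
          = (h y : ℝ) + 2 * (φ ks : ℝ) := by exact_mod_cast hvsy
      rw [e1, e2]
      simpa using hε
  case _ =>
    -- the geodesic-ray comparison
    intro T' γ' hdom' hgeo'
    -- limits for γ along T
    have hRLγ : ∀ y z : B3,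
        RayLimit (fun g h => (wordDist {σ 0, (σ 0)⁻¹, σ 1, (σ 1)⁻¹} g h : ℝ))
          (insert (0:ℝ) {t : ℝ | ∃ k : ℕ, t = 2 * (φ k : ℝ)})
          (fun t : ℝ => if ht : ∃ k : ℕ, t = 2 * (φ k : ℝ) then xx (φ ht.choose) else 1)
          y z ((h y - h z : ℤ) : ℝ) := by
      intro y z
      obtain ⟨Ky, hKy⟩ := hstab y
      obtain ⟨Kz, hKz⟩ := hstab z
      unfold RayLimit
      apply Filter.Tendsto.congr' _ tendsto_const_nhds
      rw [Filter.EventuallyEq, Filter.eventually_inf_principal]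
      rw [Filter.eventually_atTop]
      refine ⟨2 * (φ (max Ky Kz) : ℝ) + 1, ?_⟩
      intro t hN hT
      obtain ⟨k, hk, rfl⟩ := hTdec (max Ky Kz) t hT hN
      rw [hγat k]
      have hky : Ky ≤ k := le_trans (le_max_left _ _) hk
      have hkz : Kz ≤ k := le_trans (le_max_right _ _) hk
      have e1 : (wordDist {σ 0, (σ 0)⁻¹, σ 1, (σ 1)⁻¹} (xx (φ k)) y : ℤ)
          = h y + 2 * (φ k) := by
        have h1 := hKy k hky
        unfold cseq at h1
        have h2 := hD (xx (φ k)) y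
        push_cast [h2]
        omega
      have e2 : (wordDist {σ 0, (σ 0)⁻¹, σ 1, (σ 1)⁻¹} (xx (φ k)) z : ℤ)
          = h z + 2 * (φ k) := by
        have h1 := hKz k hkz
        unfold cseq at h1
        have h2 := hD (xx (φ k)) z
        push_cast [h2]
        omega
      have e1' : (wordDist {σ 0, (σ 0)⁻¹, σ 1, (σ 1)⁻¹} (xx (φ k)) y : ℝ)
          = (h y : ℝ) + 2 * (φ k : ℝ) := by exact_mod_cast e1
      have e2' : (wordDist {σ 0, (σ 0)⁻¹, σ 1, (σ 1)⁻¹} (xx (φ k)) z : ℝ)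
          = (h z : ℝ) + 2 * (φ k : ℝ) := by exact_mod_cast e2
      show ((h y - h z : ℤ) : ℝ) = (wordDist {σ 0, (σ 0)⁻¹, σ 1, (σ 1)⁻¹} (xx (φ k)) y : ℝ)
        - (wordDist {σ 0, (σ 0)⁻¹, σ 1, (σ 1)⁻¹} (xx (φ k)) z : ℝ)
      rw [e1', e2']
      push_cast
      ring
    -- natural parametrization of T'
    have hT'sub := hdom'.1
    have hT'0 := hdom'.2.1
    have hT'unb := hdom'.2.2
    have hcast : ∀ t ∈ T', ∃ n : ℕ, (n : ℝ) = t := by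
      intro t ht
      refine ⟨wordDist {σ 0, (σ 0)⁻¹, σ 1, (σ 1)⁻¹} (γ' 0) (γ' t), ?_⟩
      have h1 : (wordDist {σ 0, (σ 0)⁻¹, σ 1, (σ 1)⁻¹} (γ' 0) (γ' t) : ℝ) = |0 - t| :=
        hgeo' 0 hT'0 t ht
      rw [h1, abs_of_nonpos (by have := Set.mem_Ici.mp (hT'sub ht); linarith)]
      ring
    set S' : Set ℕ := {n : ℕ | (n : ℝ) ∈ T'} with hS'
    have h0S' : 0 ∈ S' := by
      show ((0:ℕ) : ℝ) ∈ T'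
      simpa using hT'0
    have hS'unb : ∀ M : ℕ, ∃ n ∈ S', M < n := by
      intro M
      obtain ⟨t, htT, hMt⟩ := hT'unb M
      obtain ⟨n, hn⟩ := hcast t htT
      refine ⟨n, by rw [hS']; simp only [Set.mem_setOf_eq]; rw [hn]; exact htT, ?_⟩
      have : (M:ℝ) < (n:ℝ) := by rw [hn]; exact hMt
      exact_mod_cast this
    set g : ℕ → B3 := fun n => γ' (n:ℝ) with hg
    have hdist : ∀ m n : ℕ, m ∈ S' → n ∈ S' → m ≤ n → ell ((g m)⁻¹ * g n) = n - m := by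
      intro m n hm hn hmn
      have this2 : (wordDist {σ 0, (σ 0)⁻¹, σ 1, (σ 1)⁻¹} (γ' (m:ℝ)) (γ' (n:ℝ)) : ℝ)
          = |(m:ℝ) - (n:ℝ)| := hgeo' (m:ℝ) hm (n:ℝ) hn
      have this : (ell ((g m)⁻¹ * g n) : ℝ) = |(m:ℝ) - (n:ℝ)| := by
        rw [← this2, hD]
      have hle : (m:ℝ) ≤ (n:ℝ) := by exact_mod_cast hmn
      have habs : |(m:ℝ) - n| = ((n - m : ℕ) : ℝ) := by
        rw [abs_of_nonpos (by linarith), Nat.cast_sub hmn]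
        ring
      rw [habs] at this
      exact_mod_cast this
    -- monotone horofunction data along the geodesic ray
    have hmono : ∀ (y : B3) (m n : ℕ), m ∈ S' → n ∈ S' → m ≤ n →
        (ell ((g n)⁻¹ * y) : ℤ) - n ≤ (ell ((g m)⁻¹ * y) : ℤ) - m := by
      intro y m n hm hn hmn
      have h1 : ell ((g n)⁻¹ * y) ≤ ell ((g n)⁻¹ * g m) + ell ((g m)⁻¹ * y) := by
        have := ell_mul_le ((g n)⁻¹ * g m) ((g m)⁻¹ * y)
        simpa [mul_assoc] using this
      have h2 : ell ((g n)⁻¹ * g m) = n - m := by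
        rw [show (g n)⁻¹ * g m = ((g m)⁻¹ * g n)⁻¹ by group, ell_inv]
        exact hdist m n hm hn hmn
      rw [h2] at h1
      have h3 : (ell ((g n)⁻¹ * y) : ℤ) ≤ (n - m : ℕ) + ell ((g m)⁻¹ * y) := by exact_mod_cast h1
      push_cast [Nat.cast_sub hmn] at h3
      omega
    have hbdd : ∀ (y : B3) (n : ℕ), n ∈ S' →
        -((ell y⁻¹ : ℤ) + (ell ((g 0)⁻¹) : ℤ)) ≤ (ell ((g n)⁻¹ * y) : ℤ) - n := by
      intro y n hn
      have h1 : (n : ℕ) = ell ((g 0)⁻¹ * g n) := (hdist 0 n h0S' hn (Nat.zero_le n)).symm ▸ by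
        simp [hdist 0 n h0S' hn (Nat.zero_le n)]
      have h2 : ell ((g 0)⁻¹ * g n) ≤ ell ((g 0)⁻¹) + ell (g n) := by
        have := ell_mul_le ((g 0)⁻¹) (g n)
        simpa using this
      have h3 : ell (g n) = ell ((g n)⁻¹) := (ell_inv (g n)).symm
      have h4 : ell ((g n)⁻¹) ≤ ell ((g n)⁻¹ * y) + ell y⁻¹ := by
        have := ell_mul_le ((g n)⁻¹ * y) y⁻¹
        simpa [mul_assoc] using this
      have h5 : n ≤ ell ((g 0)⁻¹) + (ell ((g n)⁻¹ * y) + ell y⁻¹) := by omega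
      have h6 : (n:ℤ) ≤ (ell ((g 0)⁻¹) : ℤ) + ((ell ((g n)⁻¹ * y) : ℤ) + (ell y⁻¹ : ℤ)) := by
        exact_mod_cast h5
      omega
    -- eventual constancy of the horofunction data
    have H : ∀ y : B3, ∃ (Fv : ℤ) (Nv : ℕ), Nv ∈ S' ∧ ∀ n ∈ S', Nv ≤ n →
        (ell ((g n)⁻¹ * y) : ℤ) - n = Fv := by
      intro y
      obtain ⟨lb, ⟨n₀, hn₀S, hn₀⟩, hleast⟩ := Int.exists_least_of_bdd
        (P := fun z => ∃ n ∈ S', (ell ((g n)⁻¹ * y) : ℤ) - n = z)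
        ⟨-((ell y⁻¹ : ℤ) + (ell ((g 0)⁻¹) : ℤ)), by
          rintro z ⟨n, hn, rfl⟩
          exact hbdd y n hn⟩
        ⟨(ell ((g 0)⁻¹ * y) : ℤ) - 0, 0, h0S', by simp⟩
      refine ⟨lb, n₀, hn₀S, ?_⟩
      intro n hn hn₀n
      have h1 := hmono y n₀ n hn₀S hn hn₀n
      rw [hn₀] at h1
      have h2 := hleast _ ⟨n, hn, rfl⟩
      omega
    choose F N hNmem hF using H
    -- limits for γ' along T'
    have hRLγ' : ∀ y z : B3,
        RayLimit (fun g h => (wordDist {σ 0, (σ 0)⁻¹, σ 1, (σ 1)⁻¹} g h : ℝ)) T' γ'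
          y z ((F y - F z : ℤ) : ℝ) := by
      intro y z
      unfold RayLimit
      apply Filter.Tendsto.congr' _ tendsto_const_nhds
      rw [Filter.EventuallyEq, Filter.eventually_inf_principal, Filter.eventually_atTop]
      refine ⟨(max (N y) (N z) : ℕ), ?_⟩
      intro t hN hT
      obtain ⟨n, hn⟩ := hcast t hT
      have hnS : n ∈ S' := by rw [hS']; simp only [Set.mem_setOf_eq]; rw [hn]; exact hT
      have hny : N y ≤ n := by
        have : ((max (N y) (N z) : ℕ) : ℝ) ≤ (n : ℝ) := by rw [hn]; exact hN
        have := Nat.cast_le.mp this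
        omega
      have hnz : N z ≤ n := by
        have : ((max (N y) (N z) : ℕ) : ℝ) ≤ (n : ℝ) := by rw [hn]; exact hN
        have := Nat.cast_le.mp this
        omega
      have ey := hF y n hnS hny
      have ez := hF z n hnS hnz
      have hγ't : γ' t = g n := by show γ' t = γ' (n:ℝ); rw [hn]
      rw [hγ't]
      have e1 : (wordDist {σ 0, (σ 0)⁻¹, σ 1, (σ 1)⁻¹} (g n) y : ℤ) = F y + n := by
        have := hD (g n) y
        push_cast [this]
        omega
      have e2 : (wordDist {σ 0, (σ 0)⁻¹, σ 1, (σ 1)⁻¹} (g n) z : ℤ) = F z + n := by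
        have := hD (g n) z
        push_cast [this]
        omega
      have e1' : (wordDist {σ 0, (σ 0)⁻¹, σ 1, (σ 1)⁻¹} (g n) y : ℝ) = (F y : ℝ) + n := by
        exact_mod_cast e1
      have e2' : (wordDist {σ 0, (σ 0)⁻¹, σ 1, (σ 1)⁻¹} (g n) z : ℝ) = (F z : ℝ) + n := by
        exact_mod_cast e2
      show ((F y - F z : ℤ) : ℝ) = (wordDist {σ 0, (σ 0)⁻¹, σ 1, (σ 1)⁻¹} (g n) y : ℝ)
        - (wordDist {σ 0, (σ 0)⁻¹, σ 1, (σ 1)⁻¹} (g n) z : ℝ)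
      rw [e1', e2']
      push_cast
      ring
    -- main dichotomy
    by_cases hne : ∃ y z : B3, F y - F z ≠ h y - h z
    · obtain ⟨y, z, hyz⟩ := hne
      exact ⟨y, z, ((h y - h z : ℤ) : ℝ), ((F y - F z : ℤ) : ℝ), hRLγ y z, hRLγ' y z,
        fun hc => hyz (by exact_mod_cast hc.symm)⟩
    · push_neg at hne
      exfalso
      -- h 1 = 0
      have h1zero : h 1 = 0 := by
        obtain ⟨K, hK⟩ := hstab 1
        have h1 := hK K le_rfl
        unfold cseq at h1
        rw [mul_one, ell_inv, ell_xx] at h1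
        omega
      set c : ℤ := F 1 with hc
      have hFh : ∀ y, F y = h y + c := by
        intro y
        have := hne y 1
        rw [h1zero] at this
        omega
      -- choose s
      obtain ⟨s, hsS, hs⟩ := hS'unb (max (N 1) (N ((σ 0 * σ 1)⁻¹)))
      have hsN1 : N 1 ≤ s := le_trans (le_max_left _ _) (le_of_lt hs)
      have hsNab : N ((σ 0 * σ 1)⁻¹) ≤ s := le_trans (le_max_right _ _) (le_of_lt hs)
      -- m = ell (g s), with (m : ℤ) = s + c
      have hfs1 := hF 1 s hsS hsN1
      rw [mul_one, ell_inv] at hfs1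
      have hmsc : (ell (g s) : ℤ) = s + c := by
        rw [hc]
        omega
      set m : ℕ := ell (g s) with hm
      -- h (g s) = -m
      obtain ⟨t, htS, hts⟩ := hS'unb (max (N (g s)) s)
      have htNgs : N (g s) ≤ t := le_trans (le_max_left _ _) (le_of_lt hts)
      have htge : s ≤ t := le_trans (le_max_right _ _) (le_of_lt hts)
      have hft := hF (g s) t htS htNgs
      have hdst : ell ((g t)⁻¹ * g s) = t - s := by
        rw [show (g t)⁻¹ * g s = ((g s)⁻¹ * g t)⁻¹ by group, ell_inv]
        exact hdist s t hsS htS htge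
      rw [hdst] at hft
      have hFgs : F (g s) = -(s:ℤ) := by
        have : ((t - s : ℕ) : ℤ) = (t:ℤ) - s := by push_cast [Nat.cast_sub htge]; ring
        omega
      have hhgs : h (g s) = -(m : ℤ) := by
        have := hFh (g s)
        rw [hFgs] at this
        omega
      -- rigidity: g s = σ0 ^ m
      obtain ⟨K₃, hK₃⟩ := hstab (g s)
      have hk₃ := hK₃ (max K₃ m) (le_max_left _ _)
      unfold cseq at hk₃
      rw [hhgs] at hk₃
      set n : ℕ := φ (max K₃ m) with hn
      have hmn : m ≤ n := le_trans (le_max_right K₃ m) hφ.le_apply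
      have hxgs : ell ((xx n)⁻¹ * g s) = 2*n - m := by
        have h1 : (ell ((xx n)⁻¹ * g s) : ℤ) = 2*(n:ℤ) - m := by omega
        have h2 : ((2*n - m : ℕ) : ℤ) = 2*(n:ℤ) - m := by
          push_cast [Nat.cast_sub (by omega : m ≤ 2*n)]
          ring
        exact_mod_cast h1.trans h2.symm
      have hgsinv : ell ((g s)⁻¹ * xx n) = 2*n - m := by
        rw [show (g s)⁻¹ * xx n = ((xx n)⁻¹ * g s)⁻¹ by group, ell_inv]
        exact hxgs
      have hgsval : g s = (σ 0)^m := rigid hm.symm hgsinv hmn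
      -- contradiction via y = (σ0 σ1)⁻¹
      have hfab := hF ((σ 0 * σ 1)⁻¹) s hsS hsNab
      have habl : ell ((g s)⁻¹ * (σ 0 * σ 1)⁻¹) = m + 2 := by
        rw [show (g s)⁻¹ * (σ 0 * σ 1)⁻¹ = (σ 0 * σ 1 * (g s))⁻¹ by group, ell_inv,
          hgsval, ell_abam]
      rw [habl] at hfab
      have hhab : h ((σ 0 * σ 1)⁻¹) = 2 := by
        have := hFh ((σ 0 * σ 1)⁻¹)
        omega
      -- but h((σ0σ1)⁻¹) ≤ 0
      obtain ⟨K₄, hK₄⟩ := hstab ((σ 0 * σ 1)⁻¹)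
      have hk₄ := hK₄ (max K₄ 1) (le_max_left _ _)
      unfold cseq at hk₄
      rw [hhab] at hk₄
      have hn1 : 1 ≤ φ (max K₄ 1) := le_trans (le_max_right K₄ 1) hφ.le_apply
      obtain ⟨n', hn'⟩ : ∃ n', φ (max K₄ 1) = n' + 1 := ⟨φ (max K₄ 1) - 1, by omega⟩
      have hub : ell ((xx (φ (max K₄ 1)))⁻¹ * (σ 0 * σ 1)⁻¹) ≤ 2 * (n' + 1) := by
        rw [show (xx (φ (max K₄ 1)))⁻¹ * (σ 0 * σ 1)⁻¹
            = (σ 0 * σ 1 * xx (φ (max K₄ 1)))⁻¹ by group, ell_inv, hn']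
        exact ell_ab_xx n'
      rw [hn'] at hk₄
      have : (ell ((xx (n' + 1))⁻¹ * (σ 0 * σ 1)⁻¹) : ℤ) ≤ 2 * ((n':ℤ) + 1) := by
        rw [hn'] at hub
        exact_mod_cast hub
      omega
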